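/- Let X be a Hausdorff uniform space with uniformity 𝒰. If X has property (P) and no isolated point, then every topologically stable homeomorphism h : X → X has the finite shadowing property and the strict periodic shadowing property. -/

import Mathlib

open Filter Topology Set

section Defs

variable {Z : Type*} [UniformSpace Z]

/-- A uniform space `Z` has property (P). -/
def PropertyP (Z : Type*) [UniformSpace Z] : Prop :=
  ∀ V ∈ uniformity Z, ∃ U ∈ uniformity Z,
    ∀ (k : ℕ), 1 ≤ k → ∀ a b : Fin k → Z, Function.Injective a → Function.Injective b →
      (∀ j : Fin k, (a j, b j) ∈ U) →
      ∃ h : Z ≃ₜ Z, (∀ j : Fin k, h (a j) = b j) ∧ ∀ x : Z, (x, h x) ∈ V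

/-- `f` has the finite shadowing property (uniform space version). -/
def FiniteShadowingPropertyU (f : Z → Z) : Prop :=
  ∀ V ∈ uniformity Z, ∃ U ∈ uniformity Z, ∀ (k : ℕ), 1 ≤ k → ∀ x : ℕ → Z,
    (∀ j < k, (f (x j), x (j + 1)) ∈ U) →
    ∃ a : Z, ∀ j ≤ k, (x j, f^[j] a) ∈ V

/-- `f` has the strict periodic shadowing property (uniform space version): every `U`-cycle
`(x_j)_{j=0}^k` for `f` is `V`-shadowed by some point `a` with `f^[k] a = a`. -/
def StrictPeriodicShadowingPropertyU (f : Z → Z) : Prop :=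
  ∀ V ∈ uniformity Z, ∃ U ∈ uniformity Z, ∀ (k : ℕ), 1 ≤ k → ∀ x : ℕ → Z,
    (∀ j < k, (f (x j), x (j + 1)) ∈ U) → x k = x 0 →
    ∃ a : Z, f^[k] a = a ∧ ∀ j ≤ k, (x j, f^[j] a) ∈ V

/-- The homeomorphism `h` is topologically stable (uniform space version). -/
def TopologicallyStableU (h : Z ≃ₜ Z) : Prop :=
  ∀ V ∈ uniformity Z, ∃ U ∈ uniformity Z, ∀ g : Z ≃ₜ Z,
    (∀ x : Z, (h x, g x) ∈ U) →
    ∃ φ : Z → Z, Continuous φ ∧ (∀ x : Z, h (φ x) = φ (g x)) ∧ ∀ x : Z, (x, φ x) ∈ V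

end Defs

section Aux
variable {X : Type*} [UniformSpace X] [T2Space X]

lemma pick_avoid (hni : ∀ x : X, Filter.NeBot (𝓝[≠] x)) (x : X) {N : Set X} (hN : N ∈ 𝓝 x)
    {S : Set X} (hS : S.Finite) : ∃ y ∈ N, y ∉ S := by
  have hcl : IsClosed (S \ {x}) := (hS.subset diff_subset).isClosed
  have h1 : (S \ {x})ᶜ ∈ 𝓝 x := hcl.isOpen_compl.mem_nhds (by simp)
  have h2 : N ∩ (S \ {x})ᶜ ∈ 𝓝[≠] x := nhdsWithin_le_nhds (inter_mem hN h1)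
  haveI := hni x
  obtain ⟨y, hy⟩ := Filter.nonempty_of_mem (inter_mem h2 self_mem_nhdsWithin)
  refine ⟨y, hy.1.1, fun hyS => hy.1.2 ⟨hyS, ?_⟩⟩
  simpa using hy.2

lemma exists_approx (hni : ∀ x : X, Filter.NeBot (𝓝[≠] x)) (h : X ≃ₜ X)
    {W : Set (X × X)} (hW : W ∈ uniformity X) (x : ℕ → X) (k : ℕ) :
    ∃ y : ℕ → X, Set.InjOn y (Set.Iic k) ∧
      ∀ j ≤ k, (x j, y j) ∈ W ∧ (h (x j), h (y j)) ∈ W := by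
  have hN : ∀ j : ℕ,
      (UniformSpace.ball (x j) W ∩ h ⁻¹' UniformSpace.ball (h (x j)) W) ∈ 𝓝 (x j) :=
    fun j => inter_mem (UniformSpace.ball_mem_nhds _ hW)
      (h.continuous.continuousAt.preimage_mem_nhds (UniformSpace.ball_mem_nhds _ hW))
  induction k with
  | zero =>
    obtain ⟨y0, hy0, -⟩ := pick_avoid hni (x 0) (hN 0) Set.finite_empty
    refine ⟨fun _ => y0, fun i hi j hj _ => by simp only [Set.mem_Iic, Nat.le_zero] at hi hj; omega, fun j hj => ?_⟩
    interval_cases j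
    exact ⟨hy0.1, hy0.2⟩
  | succ k ih =>
    obtain ⟨y, hyinj, hy⟩ := ih
    obtain ⟨z, hz, hznot⟩ := pick_avoid hni (x (k+1)) (hN (k+1)) ((Set.finite_Iic k).image y)
    refine ⟨Function.update y (k+1) z, ?_, ?_⟩
    · intro i hi j hj hij
      simp only [Set.mem_Iic] at hi hj
      by_cases hik : i = k+1 <;> by_cases hjk : j = k+1
      · omega
      · exfalso
        rw [hik, Function.update_self, Function.update_of_ne hjk] at hij
        exact hznot ⟨j, Set.mem_Iic.mpr (by omega), hij.symm⟩
      · exfalso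
        rw [hjk, Function.update_self, Function.update_of_ne hik] at hij
        exact hznot ⟨i, Set.mem_Iic.mpr (by omega), hij⟩
      · rw [Function.update_of_ne hik, Function.update_of_ne hjk] at hij
        exact hyinj (Set.mem_Iic.mpr (by omega : i ≤ k)) (Set.mem_Iic.mpr (by omega : j ≤ k)) hij
    · intro j hj
      by_cases hjk : j = k+1
      · subst hjk
        rw [Function.update_self]
        exact ⟨hz.1, hz.2⟩
      · rw [Function.update_of_ne hjk]
        exact hy j (by omega)

end Aux

/-- Let `X` be a Hausdorff uniform space. If `X` has property (P) and no isolated point, then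
every topologically stable homeomorphism `h : X → X` has the finite shadowing property and the
strict periodic shadowing property. -/
theorem topologicallyStable_shadowing_of_propertyP
    {X : Type*} [UniformSpace X] [T2Space X]
    (hP : PropertyP X) (hni : ∀ x : X, Filter.NeBot (𝓝[≠] x))
    (h : X ≃ₜ X) (hstable : TopologicallyStableU h) :
    FiniteShadowingPropertyU (⇑h) ∧ StrictPeriodicShadowingPropertyU (⇑h) := by
  constructor
  · intro V hV
    obtain ⟨V₂, hV₂, hV₂symm, hV₂comp⟩ := comp_symm_mem_uniformity_sets hV
    obtain ⟨Us, hUs, hstab⟩ := hstable V₂ hV₂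
    obtain ⟨UP, hUP, hPe⟩ := hP Us hUs
    obtain ⟨W₀, hW₀, hW₀symm, hW₀comp⟩ := comp_symm_mem_uniformity_sets (inter_mem hUP hV₂)
    obtain ⟨W, hWmem, hWsymm, hWcomp⟩ := comp_symm_mem_uniformity_sets hW₀
    have hWsub : W ⊆ W₀ := fun p hp =>
      hWcomp ⟨p.1, refl_mem_uniformity hWmem, hp⟩
    have hW3 : SetRel.comp (SetRel.comp W W) W ⊆ UP := fun p hp =>
      (hW₀comp (SetRel.comp_subset_comp hWcomp hWsub hp)).1
    have hWV₂ : W ⊆ V₂ := fun p hp =>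
      (hW₀comp ⟨p.1, refl_mem_uniformity hW₀, hWsub hp⟩).2
    refine ⟨W, hWmem, ?_⟩
    intro k hk x hchain
    obtain ⟨y, hyinj, hy⟩ := exists_approx hni h hWmem x k
    have hchain' : ∀ j < k, (h (y j), y (j+1)) ∈ UP := by
      intro j hj
      refine hW3 ⟨x (j+1), ⟨h (x j), ?_, hchain j hj⟩, (hy (j+1) hj).1⟩
      exact hWsymm.symm _ _ (hy j (le_of_lt hj)).2
    have ainj : Function.Injective (fun j : Fin k => h (y j.val)) := by
      intro i j hij
      have h1 := h.injective hij
      exact Fin.ext (hyinj (Set.mem_Iic.mpr i.isLt.le) (Set.mem_Iic.mpr j.isLt.le) h1)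
    have binj : Function.Injective (fun j : Fin k => y (j.val + 1)) := by
      intro i j hij
      have h1 := hyinj (Set.mem_Iic.mpr i.isLt) (Set.mem_Iic.mpr j.isLt) hij
      exact Fin.ext (by omega)
    obtain ⟨e, he1, he2⟩ := hPe k hk _ _ ainj binj (fun j => hchain' j.val j.isLt)
    set g : X ≃ₜ X := h.trans e with hg
    have hgU : ∀ z : X, (h z, g z) ∈ Us := fun z => he2 (h z)
    obtain ⟨φ, hφc, hφsemi, hφclose⟩ := hstab g hgU
    have horb : ∀ j ≤ k, g^[j] (y 0) = y j := by
      intro j hj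
      induction j with
      | zero => rfl
      | succ j ih =>
        rw [Function.iterate_succ_apply', ih (by omega)]
        exact he1 ⟨j, by omega⟩
    have hsemi : Function.Semiconj φ ⇑g ⇑h := fun z => (hφsemi z).symm
    refine ⟨φ (y 0), fun j hj => ?_⟩
    have h2 : h^[j] (φ (y 0)) = φ (y j) := by
      rw [← (hsemi.iterate_right j) (y 0), horb j hj]
    rw [h2]
    exact hV₂comp ⟨y j, hWV₂ (hy j hj).1, hφclose (y j)⟩
  · intro V hV
    obtain ⟨V₂, hV₂, hV₂symm, hV₂comp⟩ := comp_symm_mem_uniformity_sets hV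
    obtain ⟨Us, hUs, hstab⟩ := hstable V₂ hV₂
    obtain ⟨UP, hUP, hPe⟩ := hP Us hUs
    obtain ⟨W₀, hW₀, hW₀symm, hW₀comp⟩ := comp_symm_mem_uniformity_sets (inter_mem hUP hV₂)
    obtain ⟨W, hWmem, hWsymm, hWcomp⟩ := comp_symm_mem_uniformity_sets hW₀
    have hWsub : W ⊆ W₀ := fun p hp =>
      hWcomp ⟨p.1, refl_mem_uniformity hWmem, hp⟩
    have hW3 : SetRel.comp (SetRel.comp W W) W ⊆ UP := fun p hp =>
      (hW₀comp (SetRel.comp_subset_comp hWcomp hWsub hp)).1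
    have hWV₂ : W ⊆ V₂ := fun p hp =>
      (hW₀comp ⟨p.1, refl_mem_uniformity hW₀, hWsub hp⟩).2
    refine ⟨W, hWmem, ?_⟩
    intro k hk x hchain hcyc
    obtain ⟨y, hyinj, hy⟩ := exists_approx hni h hWmem x (k - 1)
    -- the cyclic extension of y
    set z : ℕ → X := fun j => y (j % k) with hz
    have hzlt : ∀ j, j < k → z j = y j := fun j hj => by
      simp only [hz, Nat.mod_eq_of_lt hj]
    have hz0 : z 0 = y 0 := hzlt 0 (by omega)
    have hzk : z k = y 0 := by simp [hz, Nat.mod_self]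
    have hy' : ∀ j ≤ k, (x j, z j) ∈ W ∧ (h (x j), h (z j)) ∈ W := by
      intro j hj
      rcases eq_or_lt_of_le hj with rfl | hjk
      · rw [hzk, hcyc]
        exact hy 0 (by omega)
      · rw [hzlt j hjk]
        exact hy j (by omega)
    have hchain' : ∀ j < k, (h (z j), z (j+1)) ∈ UP := by
      intro j hj
      refine hW3 ⟨x (j+1), ⟨h (x j), ?_, hchain j hj⟩, (hy' (j+1) hj).1⟩
      exact hWsymm.symm _ _ (hy' j (le_of_lt hj)).2
    have ainj : Function.Injective (fun j : Fin k => h (z j.val)) := by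
      intro i j hij
      have h1 := h.injective hij
      rw [hzlt _ i.isLt, hzlt _ j.isLt] at h1
      exact Fin.ext (hyinj (Set.mem_Iic.mpr (by omega)) (Set.mem_Iic.mpr (by omega)) h1)
    have binj : Function.Injective (fun j : Fin k => z (j.val + 1)) := by
      intro i j hij
      simp only [hz] at hij
      have hi1 : (i.val + 1) % k < k := Nat.mod_lt _ (by omega)
      have hj1 : (j.val + 1) % k < k := Nat.mod_lt _ (by omega)
      have h1 := hyinj (Set.mem_Iic.mpr (by omega : (i.val + 1) % k ≤ k - 1))
        (Set.mem_Iic.mpr (by omega : (j.val + 1) % k ≤ k - 1)) hij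
      have h2 : i.val ≡ j.val [MOD k] := Nat.ModEq.add_right_cancel' 1 h1
      have h3 : i.val % k = j.val % k := h2
      exact Fin.ext (by rwa [Nat.mod_eq_of_lt i.isLt, Nat.mod_eq_of_lt j.isLt] at h3)
    obtain ⟨e, he1, he2⟩ := hPe k hk _ _ ainj binj (fun j => hchain' j.val j.isLt)
    set g : X ≃ₜ X := h.trans e with hg
    have hgU : ∀ w : X, (h w, g w) ∈ Us := fun w => he2 (h w)
    obtain ⟨φ, hφc, hφsemi, hφclose⟩ := hstab g hgU
    have hgz : ∀ j : ℕ, g (z j) = z (j + 1) := by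
      intro j
      have hjk : j % k < k := Nat.mod_lt _ (by omega)
      have e1 : g (z j) = z (j % k + 1) := by
        have hzz : z j = z (j % k) := by
          simp only [hz]
          rw [Nat.mod_mod_of_dvd j dvd_rfl]
        rw [hzz]
        exact he1 ⟨j % k, hjk⟩
      rw [e1]
      simp only [hz]
      congr 1
      exact (Nat.mod_modEq j k).add_right 1
    have horb : ∀ j : ℕ, g^[j] (z 0) = z j := by
      intro j
      induction j with
      | zero => rfl
      | succ j ih => rw [Function.iterate_succ_apply', ih, hgz]
    have hsemi : Function.Semiconj φ ⇑g ⇑h := fun w => (hφsemi w).symm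
    have hiter : ∀ j : ℕ, h^[j] (φ (z 0)) = φ (z j) := by
      intro j
      rw [← (hsemi.iterate_right j) (z 0), horb j]
    refine ⟨φ (z 0), ?_, fun j hj => ?_⟩
    · rw [hiter k, hzk, hz0]
    · rw [hiter j]
      exact hV₂comp ⟨z j, hWV₂ (hy' j hj).1, hφclose (z j)⟩
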